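/- Let μ ∈ (−2,2), let k = 0 or k = 1, and let K be a compact subset of ℝ. Then there exist a constant C and an integer N such that for all n ≥ N, sup_{x∈K} |ψ_{n−k}⁽ⁿ⁾(μ + x/n)| ≤ C. -/

import Mathlib

open Filter Polynomial

noncomputable section

/-- The physicists' Hermite polynomial `H_k(x) = e^{x²} (-d/dx)^k e^{-x²}`. -/
def hermiteH (k : ℕ) (x : ℝ) : ℝ :=
  Real.exp (x ^ 2) * ((-1 : ℝ) ^ k * iteratedDeriv k (fun t => Real.exp (-t ^ 2)) x)

/-- The oscillator wave functions. -/
def psiGUE (n k : ℕ) (x : ℝ) : ℝ :=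
  ((n : ℝ) / 2) ^ ((1 : ℝ) / 4) * Real.exp (-(n : ℝ) * x ^ 2 / 4) /
      Real.sqrt (2 ^ k * (Nat.factorial k : ℝ) * Real.sqrt Real.pi) *
    hermiteH k (Real.sqrt ((n : ℝ) / 2) * x)

def PH : ℕ → Polynomial ℝ
  | 0 => 1
  | (m+1) => 2 * X * PH m - derivative (PH m)

lemma PH_succ (m : ℕ) : PH (m+1) = 2 * X * PH m - derivative (PH m) := rfl

lemma PH_zero : PH 0 = 1 := rfl

lemma derivative_two_X : derivative (2 * X : Polynomial ℝ) = C 2 := by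
  simp [derivative_mul]
  exact (map_ofNat C 2).symm

lemma PH_deriv (m : ℕ) : derivative (PH (m+1)) = C (2*((m:ℝ)+1)) * PH m := by
  induction m with
  | zero =>
    rw [PH_succ, PH_zero, derivative_sub, mul_one]
    simp [derivative_two_X]
    exact (map_ofNat C 2).symm
  | succ m ih =>
    rw [PH_succ (m+1), derivative_sub, derivative_mul, derivative_two_X,
      ih, derivative_mul, derivative_C, zero_mul, zero_add]
    have hC : (C (2*((m:ℝ)+1+1))) = C 2 + C (2*((m:ℝ)+1)) := by
      rw [← C_add]; ring_nf
    push_cast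
    rw [hC, PH_succ m]
    ring

lemma PH_ode (m : ℕ) :
    derivative (derivative (PH m)) = 2*X*derivative (PH m) - C (2*(m:ℝ)) * PH m := by
  cases m with
  | zero => simp [PH_zero]
  | succ m =>
    rw [PH_deriv, derivative_mul, derivative_C, zero_mul, zero_add, PH_succ]
    push_cast
    ring

lemma PH_parity (m : ℕ) (t : ℝ) : (PH m).eval (-t) = (-1)^m * (PH m).eval t := by
  induction m using Nat.strong_induction_on with
  | _ m ih =>
    match m with
    | 0 => simp [PH_zero]
    | 1 => simp [PH_succ, PH_zero]
    | (j+2) =>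
      have h1 := ih (j+1) (by omega)
      have h0 := ih j (by omega)
      rw [PH_succ (j+1), PH_deriv]
      simp only [eval_sub, eval_mul, eval_X, eval_C, eval_ofNat, h1, h0]
      ring

-- value at zero
def hv (m : ℕ) : ℝ := (PH m).eval 0

lemma hv_zero : hv 0 = 1 := by simp [hv, PH_zero]
lemma hv_one : hv 1 = 0 := by simp [hv, PH_succ, PH_zero]
lemma hv_rec (m : ℕ) : hv (m+2) = -(2*((m:ℝ)+1+1-1)) * hv m := by
  simp [hv, PH_succ (m+1), PH_deriv]

lemma iteratedDeriv_gauss (k : ℕ) :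
    iteratedDeriv k (fun t => Real.exp (-t ^ 2)) =
      fun x => (-1 : ℝ)^k * (PH k).eval x * Real.exp (-x^2) := by
  induction k with
  | zero => funext x; simp [PH_zero]
  | succ k ih =>
    funext x
    rw [iteratedDeriv_succ, ih]
    have hexp : HasDerivAt (fun x : ℝ => Real.exp (-x^2))
        (Real.exp (-x^2) * (-(2*x))) x := by
      have h1 : HasDerivAt (fun x : ℝ => -x^2) (-(2*x)) x := by
        exact ((hasDerivAt_pow 2 x).neg).congr_deriv (by norm_num)
      exact h1.exp
    have hpoly : HasDerivAt (fun x : ℝ => (-1 : ℝ)^k * (PH k).eval x)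
        ((-1 : ℝ)^k * (derivative (PH k)).eval x) x :=
      ((PH k).hasDerivAt x).const_mul _
    have h : HasDerivAt (fun x => (-1:ℝ)^k * (PH k).eval x * Real.exp (-x^2)) _ x := hpoly.mul hexp
    rw [h.deriv]
    rw [PH_succ]
    simp only [eval_sub, eval_mul, eval_X, eval_ofNat]
    ring

lemma hermiteH_eq (k : ℕ) (x : ℝ) : hermiteH k x = (PH k).eval x := by
  rw [hermiteH, iteratedDeriv_gauss]
  have : Real.exp (x^2) * Real.exp (-x^2) = 1 := by
    rw [← Real.exp_add]; simp
  calc Real.exp (x ^ 2) * ((-1:ℝ) ^ k * ((-1:ℝ) ^ k * (PH k).eval x * Real.exp (-x ^ 2)))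
      = ((-1:ℝ)^k * (-1)^k) * (PH k).eval x * (Real.exp (x^2) * Real.exp (-x^2)) := by ring
    _ = (PH k).eval x := by rw [this, ← pow_add, Even.neg_one_pow ⟨k, by ring⟩]; ring

def phiF (m : ℕ) (t : ℝ) : ℝ := Real.exp (-t^2/2) * (PH m).eval t

lemma hasDerivAt_gauss_poly (Q : Polynomial ℝ) (t : ℝ) :
    HasDerivAt (fun t : ℝ => Real.exp (-t^2/2) * Q.eval t)
      (Real.exp (-t^2/2) * ((derivative Q - X * Q).eval t)) t := by
  have hexp : HasDerivAt (fun t : ℝ => Real.exp (-t^2/2))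
      (Real.exp (-t^2/2) * (-t)) t := by
    have h1 : HasDerivAt (fun t : ℝ => -t^2/2) (-t) t := by
      have := ((hasDerivAt_pow 2 t).neg).div_const 2
      simpa using this.congr_deriv (by ring)
    exact h1.exp
  have h := hexp.mul (Q.hasDerivAt t)
  refine h.congr_deriv ?_
  simp only [eval_sub, eval_mul, eval_X]
  ring

def phiD (m : ℕ) (t : ℝ) : ℝ :=
  Real.exp (-t^2/2) * ((derivative (PH m) - X * PH m).eval t)

lemma hasDerivAt_phiF (m : ℕ) (t : ℝ) : HasDerivAt (phiF m) (phiD m t) t :=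
  hasDerivAt_gauss_poly (PH m) t

lemma hasDerivAt_phiD (m : ℕ) (t : ℝ) :
    HasDerivAt (phiD m) ((t^2 - (2*m+1)) * phiF m t) t := by
  have h := hasDerivAt_gauss_poly (derivative (PH m) - X * PH m) t
  refine h.congr_deriv ?_
  have hode := congrArg (Polynomial.eval t) (PH_ode m)
  simp only [eval_sub, eval_mul, eval_X, eval_C, eval_ofNat, derivative_sub,
    derivative_mul, derivative_X, eval_add, eval_one, one_mul] at hode ⊢
  rw [phiF]
  nlinarith [hode, Real.exp_pos (-t^2/2)]

def En (m : ℕ) (t : ℝ) : ℝ := (phiD m t)^2 + (2*m+1 - t^2) * (phiF m t)^2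

lemma hasDerivAt_En (m : ℕ) (t : ℝ) :
    HasDerivAt (En m) (-2*t*(phiF m t)^2) t := by
  have h1 := (hasDerivAt_phiD m t).pow 2
  have h2 : HasDerivAt (fun t : ℝ => (2*(m:ℝ)+1 - t^2)) (-(2*t)) t := by
    simpa using (hasDerivAt_pow 2 t).const_sub (2*(m:ℝ)+1)
  have h3 := h2.mul ((hasDerivAt_phiF m t).pow 2)
  refine (h1.add h3).congr_deriv ?_
  simp only [Pi.pow_apply]
  ring

lemma En_antitone (m : ℕ) : AntitoneOn (En m) (Set.Ici 0) := by
  have hdiff : ∀ t : ℝ, DifferentiableAt ℝ (En m) t :=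
    fun t => (hasDerivAt_En m t).differentiableAt
  apply antitoneOn_of_deriv_nonpos (convex_Ici 0)
  · exact (fun t _ => (hdiff t).continuousAt.continuousWithinAt)
  · exact fun t _ => (hdiff t).differentiableWithinAt
  · intro t ht
    rw [interior_Ici] at ht
    rw [(hasDerivAt_En m t).deriv]
    have ht' : (0:ℝ) < t := ht
    nlinarith [sq_nonneg (phiF m t)]

lemma phiF_sq_parity (m : ℕ) (t : ℝ) : (phiF m (-t))^2 = (phiF m t)^2 := by
  rw [phiF, phiF, PH_parity, neg_pow]
  norm_num
  rcases Nat.even_or_odd m with h | h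
  · rw [h.neg_one_pow]; ring
  · rw [h.neg_one_pow]; ring

lemma key_bound (m : ℕ) (x : ℝ) :
    (2*m+1 - x^2) * (phiF m x)^2 ≤ En m 0 := by
  have main : ∀ y : ℝ, 0 ≤ y → (2*m+1 - y^2) * (phiF m y)^2 ≤ En m 0 := by
    intro y hy
    have h1 : En m y ≤ En m 0 := En_antitone m (Set.self_mem_Ici) hy hy
    have h2 : (2*m+1 - y^2) * (phiF m y)^2 ≤ En m y := by
      rw [En]; nlinarith [sq_nonneg (phiD m y)]
    linarith
  rcases le_or_gt 0 x with h | h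
  · exact main x h
  · have := main (-x) (by linarith)
    rw [phiF_sq_parity, neg_pow] at this
    norm_num at this
    exact this

lemma En_zero_eq (m : ℕ) :
    En m 0 = ((derivative (PH m)).eval 0)^2 + (2*m+1) * (hv m)^2 := by
  rw [En, phiD, phiF, hv]
  norm_num

lemma hv_odd (j : ℕ) : hv (2*j+1) = 0 := by
  induction j with
  | zero => exact hv_one
  | succ j ih =>
    have := hv_rec (2*j+1)
    have h2 : 2*(j+1)+1 = (2*j+1)+2 := by ring
    rw [h2, this, ih, mul_zero]

lemma hv_even_sq (j : ℕ) :
    (hv (2*j))^4 * (2*(j:ℝ)+1) ≤ 4^(2*j) * ((2*j).factorial : ℝ)^2 := by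
  induction j with
  | zero => simp [hv_zero]
  | succ j ih =>
    have hrec : hv (2*(j+1)) = -(2*(2*(j:ℝ)+1)) * hv (2*j) := by
      have := hv_rec (2*j)
      have h2 : 2*(j+1) = (2*j)+2 := by ring
      rw [h2, this]; push_cast; ring_nf
    have hfac : ((2*(j+1)).factorial : ℝ) = (2*(j:ℝ)+2) * (2*(j:ℝ)+1) * ((2*j).factorial : ℝ) := by
      have h2 : 2*(j+1) = (2*j+1)+1 := by ring
      rw [h2, Nat.factorial_succ, Nat.factorial_succ]
      push_cast; ring
    have h4 : (4:ℝ)^(2*(j+1)) = 16 * 4^(2*j) := by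
      have : 2*(j+1) = (2*j)+2 := by ring
      rw [this, pow_add]; ring
    rw [hrec, hfac, h4]
    set c : ℝ := 2*(j:ℝ)+1 with hc
    set A : ℝ := 4^(2*j) * ((2*j).factorial : ℝ)^2 with hA
    have hcn : (0:ℝ) ≤ c := by rw [hc]; positivity
    have hAn : (0:ℝ) ≤ A := by rw [hA]; positivity
    have step1 : (-(2*c) * hv (2*j))^4 * (2*((j:ℝ)+1)+1)
        = 16*(c^3*(c+2)) * ((hv (2*j))^4 * c) := by rw [hc]; ring
    have step2 : 16*(c^3*(c+2)) * ((hv (2*j))^4 * c) ≤ 16*(c^3*(c+2)) * A := by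
      apply mul_le_mul_of_nonneg_left ih (by positivity)
    have step3 : 16*(c^3*(c+2)) * A ≤ 16*A*((c+1)^2*c^2) := by nlinarith
    have step4 : 16*A*((c+1)^2*c^2) = 16 * 4^(2*j) * ((c+1) * c * ((2*j).factorial : ℝ))^2 := by
      rw [hA]; ring
    push_cast
    push_cast at step1
    calc (-(2*c) * hv (2*j))^4 * (2*((j:ℝ)+1)+1)
        = 16*(c^3*(c+2)) * ((hv (2*j))^4 * c) := step1
      _ ≤ 16*(c^3*(c+2)) * A := step2
      _ ≤ 16*A*((c+1)^2*c^2) := step3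
      _ = 16 * 4^(2*j) * ((c+1) * c * ((2*j).factorial : ℝ))^2 := step4
      _ = 16 * 4^(2*j) * ((2*(j:ℝ)+2) * (2*(j:ℝ)+1) * ((2*j).factorial : ℝ))^2 := by
          rw [hc]; ring

lemma En_zero_nonneg (m : ℕ) : 0 ≤ En m 0 := by
  rw [En_zero_eq]; positivity

lemma En_zero_sq_le (m : ℕ) :
    (En m 0)^2 ≤ 4*((m:ℝ)+1) * 4^m * ((m.factorial : ℝ))^2 := by
  rcases Nat.even_or_odd m with ⟨i, hi⟩ | ⟨i, hi⟩
  · obtain rfl : m = 2*i := by omega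
    have hd : (derivative (PH (2*i))).eval 0 = 0 := by
      match i with
      | 0 => simp [PH_zero]
      | (i+1) =>
        have h3 : 2*(i+1) = (2*i+1)+1 := by ring
        rw [h3, PH_deriv, eval_mul, eval_C]
        have := hv_odd i
        rw [hv] at this
        rw [this, mul_zero]
    rw [En_zero_eq, hd]
    set c : ℝ := 2*(i:ℝ)+1 with hcdef
    have hc1 : (1:ℝ) ≤ c := by rw [hcdef]; have : (0:ℝ) ≤ (i:ℝ) := Nat.cast_nonneg i; linarith
    have hcpos : (0:ℝ) < c := by linarith
    set A : ℝ := 4^(2*i) * (((2*i).factorial : ℝ))^2 with hA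
    have hAn : (0:ℝ) ≤ A := by rw [hA]; positivity
    have h5 : (hv (2*i))^4 * c ≤ A := hv_even_sq i
    have hint1 := mul_le_mul_of_nonneg_left h5 (sq_nonneg (2*c-1))
    have goal' : ((0:ℝ)^2 + (2*(2*(i:ℝ))+1) * (hv (2*i))^2)^2 * c ≤ (4*c*A) * c := by
      have he : ((0:ℝ)^2 + (2*(2*(i:ℝ))+1) * (hv (2*i))^2)^2 * c
          = (2*c-1)^2 * ((hv (2*i))^4 * c) := by rw [hcdef]; ring
      rw [he]
      nlinarith [hint1, hAn, hc1, sq_nonneg (hv (2*i))]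
    have goal2 : ((0:ℝ)^2 + (2*(2*(i:ℝ))+1) * (hv (2*i))^2)^2 ≤ 4*c*A :=
      le_of_mul_le_mul_right goal' hcpos
    calc ((0:ℝ)^2 + (2*(↑(2*i) : ℝ)+1) * (hv (2*i))^2)^2
        = ((0:ℝ)^2 + (2*(2*(i:ℝ))+1) * (hv (2*i))^2)^2 := by push_cast; ring_nf
      _ ≤ 4*c*A := goal2
      _ = 4*((↑(2*i) : ℝ)+1) * 4^(2*i) * (((2*i).factorial : ℝ))^2 := by
          rw [hcdef, hA]; push_cast; ring
  · obtain rfl : m = 2*i+1 := by omega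
    have hm0 : hv (2*i+1) = 0 := hv_odd i
    have hd : (derivative (PH (2*i+1))).eval 0 = 2*((2*(i:ℝ))+1) * hv (2*i) := by
      rcases i with _ | i
      · simp [PH_succ, PH_zero, hv, derivative_two_X]
      · have h3 : 2*(i+1)+1 = (2*i+2)+1 := by ring
        rw [h3, PH_deriv, eval_mul, eval_C, hv]
        push_cast; ring_nf
    rw [En_zero_eq, hd, hm0]
    set c : ℝ := 2*(i:ℝ)+1 with hcdef
    have hc1 : (1:ℝ) ≤ c := by rw [hcdef]; have : (0:ℝ) ≤ (i:ℝ) := Nat.cast_nonneg i; linarith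
    have hcpos : (0:ℝ) < c := by linarith
    set A : ℝ := 4^(2*i) * (((2*i).factorial : ℝ))^2 with hA
    have hAn : (0:ℝ) ≤ A := by rw [hA]; positivity
    have h5 : (hv (2*i))^4 * c ≤ A := hv_even_sq i
    -- En = (2c * hv(2i))^2 ; En^2 = 16 c^4 hv^4 = 16 c^3 (hv^4 c) ≤ 16 c^3 A
    -- RHS = 4(c+1) 4^(2i+1) ((2i+1)!)^2 = 4(c+1)·4·4^(2i)·c²·((2i)!)² = 16(c+1)c² A
    have hfac : (((2*i+1).factorial : ℝ)) = c * (((2*i).factorial : ℝ)) := by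
      rw [Nat.factorial_succ, hcdef]; push_cast; ring
    have goal' : ((2*c * hv (2*i))^2 + (2*(2*(i:ℝ)+1)+1) * 0^2)^2 ≤ 16*(c+1)*c^2*A := by
      have he : ((2*c * hv (2*i))^2 + (2*(2*(i:ℝ)+1)+1) * 0^2)^2
          = 16 * c^3 * ((hv (2*i))^4 * c) := by rw [hcdef]; ring
      rw [he]
      nlinarith [mul_le_mul_of_nonneg_left h5 (by positivity : (0:ℝ) ≤ 16*c^3), hAn, hc1]
    calc ((2*c * hv (2*i))^2 + (2*(↑(2*i+1) : ℝ)+1) * 0^2)^2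
        = ((2*c * hv (2*i))^2 + (2*(2*(i:ℝ)+1)+1) * 0^2)^2 := by push_cast; ring_nf
      _ ≤ 16*(c+1)*c^2*A := goal'
      _ = 4*((↑(2*i+1) : ℝ)+1) * 4^(2*i+1) * (((2*i+1).factorial : ℝ))^2 := by
          rw [hfac, hA, hcdef, pow_succ]; push_cast; ring

lemma En_zero_le (m : ℕ) :
    En m 0 ≤ 2 * Real.sqrt ((m:ℝ)+1) * 2^m * (m.factorial : ℝ) := by
  have hR : (0:ℝ) ≤ 2 * Real.sqrt ((m:ℝ)+1) * 2^m * (m.factorial : ℝ) := by positivity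
  have hsq : (2 * Real.sqrt ((m:ℝ)+1) * 2^m * (m.factorial : ℝ))^2
      = 4*((m:ℝ)+1) * 4^m * ((m.factorial : ℝ))^2 := by
    have h1 : Real.sqrt ((m:ℝ)+1) ^ 2 = (m:ℝ)+1 := Real.sq_sqrt (by positivity)
    have h2 : ((2:ℝ)^m)^2 = 4^m := by rw [← pow_mul, pow_mul']; norm_num
    calc (2 * Real.sqrt ((m:ℝ)+1) * 2^m * (m.factorial : ℝ))^2
        = 4 * (Real.sqrt ((m:ℝ)+1) ^ 2) * (((2:ℝ)^m)^2) * ((m.factorial : ℝ))^2 := by ring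
      _ = 4*((m:ℝ)+1) * 4^m * ((m.factorial : ℝ))^2 := by rw [h1, h2]
  refine le_of_pow_le_pow_left₀ (two_ne_zero) hR ?_
  rw [hsq]
  exact En_zero_sq_le m

set_option maxHeartbeats 1000000 in
/-- Bound on the oscillator wave functions in the bulk of the spectrum:
for `μ ∈ (-2,2)`, `k ∈ {0,1}` and `K ⊆ ℝ` compact, `|ψ_{n-k}⁽ⁿ⁾(μ + x/n)| ≤ C`
uniformly in `x ∈ K` for `n` large. -/
theorem psi_bulk_bound (μ : ℝ) (hμ : μ ∈ Set.Ioo (-2 : ℝ) 2)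
    (k : ℕ) (hk : k = 0 ∨ k = 1) (K : Set ℝ) (hK : IsCompact K) :
    ∃ C : ℝ, ∃ N : ℕ, ∀ n ≥ N, ∀ x ∈ K, |psiGUE n (n - k) (μ + x / n)| ≤ C := by
  obtain ⟨R0, hR0⟩ := hK.isBounded.subset_closedBall 0
  set R := max R0 0 with hRdef
  have hRnn : 0 ≤ R := le_max_right _ _
  have hRb : ∀ u ∈ K, |u| ≤ R := by
    intro u hu
    have := hR0 hu
    rw [Metric.mem_closedBall, Real.dist_eq, sub_zero] at this
    exact this.trans (le_max_left _ _)
  obtain ⟨hμ1, hμ2⟩ := hμ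
  clear_value R
  set d : ℝ := 2 - μ^2/2 with hddef
  have hd : 0 < d := by rw [hddef]; nlinarith only [hμ1, hμ2]
  set sπ := Real.sqrt Real.pi with hsπ
  have hsπpos : 0 < sπ := Real.sqrt_pos.mpr Real.pi_pos
  clear_value d sπ
  refine ⟨Real.sqrt (4/(d*sπ)), max 2 ⌈(2+4*R+R^2)/d⌉₊, ?_⟩
  intro n hn u hu
  have hn2 : 2 ≤ n := le_trans (le_max_left _ _) hn
  have hn1R : (1:ℝ) ≤ (n:ℝ) := by exact_mod_cast Nat.one_le_iff_ne_zero.mpr (by omega)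
  have hnpos : (0:ℝ) < n := by linarith only [hn1R]
  have hnd : (2+4*R+R^2) ≤ d * n := by
    have h1 : ((2+4*R+R^2)/d) ≤ (⌈(2+4*R+R^2)/d⌉₊ : ℝ) := Nat.le_ceil _
    have h2 : (⌈(2+4*R+R^2)/d⌉₊ : ℝ) ≤ (n:ℝ) := by
      exact_mod_cast le_trans (le_max_right 2 _) hn
    calc (2+4*R+R^2) = ((2+4*R+R^2)/d) * d := by field_simp
      _ ≤ (n:ℝ) * d := mul_le_mul_of_nonneg_right (h1.trans h2) hd.le
      _ = d * n := by ring
  set m := n - k with hmdef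
  have hmn : m ≤ n := Nat.sub_le n k
  have hmcast : ((n:ℝ)) - 1 ≤ (m:ℝ) := by
    have hk1 : k ≤ 1 := by rcases hk with h | h <;> omega
    have : n - 1 ≤ m := by omega
    have h2 : ((n-1 : ℕ) : ℝ) ≤ (m:ℝ) := by exact_mod_cast this
    have h3 : ((n-1 : ℕ) : ℝ) = (n:ℝ) - 1 := by
      rw [Nat.cast_sub (by omega)]; norm_num
    linarith only [h3 ▸ h2]
  have hmcast2 : (m:ℝ) ≤ (n:ℝ) := by exact_mod_cast hmn
  set y := μ + u / n with hydef
  set s := Real.sqrt ((n:ℝ)/2) with hsdef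
  set x := s * y with hxdef
  have hs2 : s^2 = (n:ℝ)/2 := Real.sq_sqrt (by positivity)
  have hx2 : x^2 = ((n:ℝ)/2) * y^2 := by rw [hxdef, mul_pow, hs2]
  clear_value m y s x
  have huR : |u| ≤ R := hRb u hu
  have huR1 : -R ≤ u := neg_le_of_abs_le huR
  have huR2 : u ≤ R := le_of_abs_le huR
  -- y² bound
  have hw : |u/(n:ℝ)| ≤ R/n := by
    rw [abs_div, abs_of_pos hnpos]
    gcongr
  have hw1 : -(R/(n:ℝ)) ≤ u/n := neg_le_of_abs_le hw
  have hw2 : u/(n:ℝ) ≤ R/n := le_of_abs_le hw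
  have hRn : R/(n:ℝ) ≤ R := div_le_self hRnn hn1R
  have hRnn' : (0:ℝ) ≤ R/n := by positivity
  have hy2 : y^2 ≤ μ^2 + (4*R + R^2)/n := by
    have t1 : 2*μ*(u/n) ≤ 4*(R/n) := by
      nlinarith only [mul_nonneg (by linarith only [hμ2] : (0:ℝ) ≤ 2-μ)
          (by linarith only [hw1] : (0:ℝ) ≤ R/n + u/n),
        mul_nonneg (by linarith only [hμ1] : (0:ℝ) ≤ 2+μ)
          (by linarith only [hw2] : (0:ℝ) ≤ R/n - u/n)]
    have t2 : (u/n)^2 ≤ (R/n)*R := by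
      have h1 : (u/n)^2 ≤ (R/n)^2 := sq_le_sq' hw1 hw2
      have h2 : (R/(n:ℝ))^2 ≤ (R/n)*R := by
        rw [sq]; exact mul_le_mul_of_nonneg_left hRn hRnn'
      linarith only [h1, h2]
    have he : 4*(R/(n:ℝ)) + (R/n)*R = (4*R+R^2)/n := by ring
    have expand : y^2 = μ^2 + 2*μ*(u/n) + (u/n)^2 := by rw [hydef]; ring
    linarith only [t1, t2, he, expand]
  -- spectral gap
  set g : ℝ := 2*(m:ℝ)+1 - x^2 with hgdef
  clear_value g
  have hgap : d*(n:ℝ)/2 ≤ g := by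
    have h1 : ((n:ℝ)/2)*y^2 ≤ ((n:ℝ)/2)*μ^2 + (4*R+R^2)/2 := by
      have h0 := mul_le_mul_of_nonneg_left hy2 (by positivity : (0:ℝ) ≤ (n:ℝ)/2)
      have he : ((n:ℝ)/2)*(μ^2 + (4*R+R^2)/n) = ((n:ℝ)/2)*μ^2 + (4*R+R^2)/2 := by
        field_simp
      linarith only [h0, he]
    have hdn : d*(n:ℝ) = 2*n - ((n:ℝ)/2)*μ^2 := by rw [hddef]; ring
    rw [hgdef, hx2]
    linarith only [h1, hdn, hnd, hmcast]
  have hgpos : (0:ℝ) < g :=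
    lt_of_lt_of_le (half_pos (mul_pos hd hnpos)) hgap
  -- key analytic and combinatorial bounds
  set F := (2:ℝ)^m * (m.factorial : ℝ) with hFdef
  have hFpos : (0:ℝ) < F := by rw [hFdef]; positivity
  clear_value F
  have hφbound : (phiF m x)^2 * g ≤ 2*Real.sqrt ((m:ℝ)+1) * F := by
    have h1 : g * (phiF m x)^2 ≤ En m 0 := by rw [hgdef]; exact key_bound m x
    have h2 := En_zero_le m
    have h3 : 2 * Real.sqrt ((m:ℝ)+1) * 2^m * (m.factorial : ℝ)
        = 2*Real.sqrt ((m:ℝ)+1) * F := by rw [hFdef]; ring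
    linarith only [h1, h2, h3]
  -- psi squared formula
  have hexp_eq : Real.exp (-(n:ℝ) * y^2/4) = Real.exp (-x^2/2) := by
    rw [hx2]; ring_nf
  have hherm : hermiteH m (s*y) = (PH m).eval x := by rw [hermiteH_eq, hxdef]
  have hψ : psiGUE n m y = ((n:ℝ)/2)^((1:ℝ)/4) * phiF m x / Real.sqrt (F*sπ) := by
    rw [psiGUE, ← hsdef, hherm, hexp_eq, phiF, hFdef, hsπ]
    ring
  have hψsq : (psiGUE n m y)^2 = Real.sqrt ((n:ℝ)/2) * (phiF m x)^2 / (F*sπ) := by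
    rw [hψ, div_pow, mul_pow]
    have h1 : (((n:ℝ)/2)^((1:ℝ)/4))^2 = Real.sqrt ((n:ℝ)/2) := by
      rw [← Real.rpow_natCast (((n:ℝ)/2)^((1:ℝ)/4)) 2, ← Real.rpow_mul (by positivity)]
      rw [Real.sqrt_eq_rpow]
      norm_num
    have h2 : (Real.sqrt (F*sπ))^2 = F*sπ := Real.sq_sqrt (by positivity)
    rw [h1, h2]
  -- main numeric bound
  have hmain : (psiGUE n m y)^2 ≤ 4/(d*sπ) := by
    rw [hψsq]
    have hQ : (phiF m x)^2 ≤ (2*Real.sqrt ((m:ℝ)+1) * F)/g :=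
      (le_div_iff₀ hgpos).mpr hφbound
    have step1 : Real.sqrt ((n:ℝ)/2)*(phiF m x)^2/(F*sπ)
        ≤ Real.sqrt ((n:ℝ)/2)*((2*Real.sqrt ((m:ℝ)+1) * F)/g)/(F*sπ) := by
      gcongr
    have step2 : Real.sqrt ((n:ℝ)/2)*((2*Real.sqrt ((m:ℝ)+1) * F)/g)/(F*sπ)
        = 2*(Real.sqrt ((n:ℝ)/2)*Real.sqrt ((m:ℝ)+1))/(g*sπ) := by
      field_simp
    have hs3 : Real.sqrt ((n:ℝ)/2)*Real.sqrt ((m:ℝ)+1) ≤ (n:ℝ) := by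
      have h1 : (m:ℝ)+1 ≤ 2*n := by linarith only [hmcast2, hn1R]
      calc Real.sqrt ((n:ℝ)/2)*Real.sqrt ((m:ℝ)+1)
          ≤ Real.sqrt ((n:ℝ)/2)*Real.sqrt (2*n) := by
            gcongr
        _ = Real.sqrt (((n:ℝ)/2)*(2*n)) := (Real.sqrt_mul (by positivity) _).symm
        _ = Real.sqrt ((n:ℝ)^2) := by ring_nf
        _ = (n:ℝ) := Real.sqrt_sq hnpos.le
    have step3 : 2*(Real.sqrt ((n:ℝ)/2)*Real.sqrt ((m:ℝ)+1))/(g*sπ) ≤ 2*n/(g*sπ) := by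
      gcongr
    have step4 : 2*(n:ℝ)/(g*sπ) ≤ 4/(d*sπ) := by
      rw [div_le_div_iff₀ (by positivity) (by positivity)]
      have h1 : d*(n:ℝ) ≤ 2*g := by linarith only [hgap]
      have h2 := mul_le_mul_of_nonneg_right h1 hsπpos.le
      linarith only [h2]
    calc Real.sqrt ((n:ℝ)/2)*(phiF m x)^2/(F*sπ)
        ≤ Real.sqrt ((n:ℝ)/2)*((2*Real.sqrt ((m:ℝ)+1) * F)/g)/(F*sπ) := step1
      _ = 2*(Real.sqrt ((n:ℝ)/2)*Real.sqrt ((m:ℝ)+1))/(g*sπ) := step2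
      _ ≤ 2*n/(g*sπ) := step3
      _ ≤ 4/(d*sπ) := step4
  have habs : |psiGUE n m y| = Real.sqrt ((psiGUE n m y)^2) :=
    (Real.sqrt_sq_eq_abs _).symm
  rw [habs]
  exact Real.sqrt_le_sqrt hmain
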